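/- arXiv:1912.05409 — 4 statements merged into one kernel-verified Lean document; each statement's English description precedes it below -/
import Mathlib

section
/- For every equalizer g ∈ ℂ and every weight w > 0 one has ξ(w, g) ≥ 1 − R, and equality is attained at the pair g* = conj(a)/T and w* = T/I. Consequently the infimum of ξ(w, g) over (w, g) ∈ (0, ∞) × ℂ equals 1 − ln(1 + |a|²/I) and is attained; i.e., the weighted minimum mean square error satisfies ξ^MMSE = 1 − R (Proposition 1, Rate–WMMSE relationship). -/
/-- **Proposition 1, Rate–WMMSE relationship.**
For vectors `h, p ∈ ℂ^N` with `a = hᴴp`, interference-plus-noise power `I > 0`,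
`T = I + |a|²`, MSE `ε(g) = |g|²T − 2 Re(g a) + 1`, weighted MSE
`ξ(w, g) = w ε(g) − ln w` and rate `R = ln(1 + |a|²/I)`:
for every `g ∈ ℂ` and `w > 0` one has `ξ(w, g) ≥ 1 − R`; equality is attained at
`g* = conj(a)/T`, `w* = T/I`; and the infimum of `ξ` over `(0,∞) × ℂ` equals
`1 − ln(1 + |a|²/I)` and is attained (`ξ^MMSE = 1 − R`). -/
theorem rate_wmmse_relationship
    (N : ℕ) (hN : 1 ≤ N) (h p : Fin N → ℂ) (I : ℝ) (hI : 0 < I)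
    (a : ℂ) (ha : a = ∑ i, starRingEnd ℂ (h i) * p i)
    (T : ℝ) (hT : T = I + ‖a‖ ^ 2)
    (ε : ℂ → ℝ) (hε : ∀ g : ℂ, ε g = ‖g‖ ^ 2 * T - 2 * (g * a).re + 1)
    (ξ : ℝ → ℂ → ℝ) (hξ : ∀ (w : ℝ) (g : ℂ), ξ w g = w * ε g - Real.log w)
    (R : ℝ) (hR : R = Real.log (1 + ‖a‖ ^ 2 / I)) :
    (∀ w : ℝ, 0 < w → ∀ g : ℂ, ξ w g ≥ 1 - R) ∧
    ξ (T / I) (starRingEnd ℂ a / (T : ℂ)) = 1 - R ∧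
    IsLeast {y : ℝ | ∃ w : ℝ, ∃ g : ℂ, 0 < w ∧ y = ξ w g}
      (1 - Real.log (1 + ‖a‖ ^ 2 / I)) := by
  have hT0 : (0:ℝ) < T := by nlinarith [sq_nonneg ‖a‖]
  have hRT : R = Real.log (T / I) := by
    rw [hR]; congr 1; field_simp [hT]; linarith [hT]
  -- ε g = T * ‖g - conj a / T‖^2 + I / T
  have hTc : ((T:ℝ):ℂ) ≠ 0 := by exact_mod_cast hT0.ne'
  have key : ∀ g : ℂ, ε g = T * ‖g - starRingEnd ℂ a / (T:ℂ)‖ ^ 2 + I / T := by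
    intro g
    have hna : ‖a‖ ^ 2 = a.re ^ 2 + a.im ^ 2 := by
      rw [Complex.sq_norm, Complex.normSq_apply]; ring
    have hng : ‖g‖ ^ 2 = g.re ^ 2 + g.im ^ 2 := by
      rw [Complex.sq_norm, Complex.normSq_apply]; ring
    have hz : ‖g - starRingEnd ℂ a / (T:ℂ)‖ ^ 2
        = (g.re - a.re / T) ^ 2 + (g.im + a.im / T) ^ 2 := by
      rw [Complex.sq_norm, Complex.normSq_apply]
      simp [Complex.div_re, Complex.div_im, Complex.normSq_apply]
      field_simp
      ring
    have hT2 : a.re ^ 2 + a.im ^ 2 = T - I := by rw [hT, hna]; ring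
    rw [hε, hz, hng, Complex.mul_re]
    field_simp
    linear_combination (-1 : ℝ) * hT2
  have hlb : ∀ w : ℝ, 0 < w → ∀ g : ℂ, ξ w g ≥ 1 - R := by
    intro w hw g
    have h1 : Real.log (w * (I/T)) ≤ w * (I/T) - 1 :=
      Real.log_le_sub_one_of_pos (by positivity)
    have h2 : Real.log (w * (I/T)) = Real.log w + Real.log (I/T) :=
      Real.log_mul hw.ne' (by positivity)
    have h3 : Real.log (I/T) = - Real.log (T/I) := by
      rw [← Real.log_inv]; congr 1; field_simp
    have h4 : ε g ≥ I / T := by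
      rw [key g]; nlinarith [sq_nonneg ‖g - starRingEnd ℂ a / (T:ℂ)‖]
    rw [hξ, hRT]
    nlinarith [mul_le_mul_of_nonneg_left h4 hw.le]
  have heq : ξ (T / I) (starRingEnd ℂ a / (T : ℂ)) = 1 - R := by
    rw [hξ, key, hRT]
    simp only [sub_self, norm_zero]
    field_simp
    ring
  refine ⟨hlb, heq, ⟨⟨T / I, starRingEnd ℂ a / (T:ℂ), by positivity, ?_⟩, ?_⟩⟩
  · rw [heq, hR]
  · rintro y ⟨w, g, hw, rfl⟩
    have := hlb w hw g
    rw [hR] at this; linarith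
end

section
/- The pair (w*, g*) = (T/I, conj(a)/T) is the unique global minimizer of the weighted MSE ξ on (0, ∞) × ℂ: for all w > 0 and g ∈ ℂ one has ξ(w, g) ≥ 1 − ln(T/I), with equality if and only if (w, g) = (w*, g*). -/
/-- The pair `(w*, g*) = (T/I, conj(a)/T)` is the unique global
minimizer of the weighted MSE `ξ(w,g) = w ε(g) − ln w` on `(0, ∞) × ℂ`: for all
`w > 0` and `g ∈ ℂ` one has `ξ(w, g) ≥ 1 − ln(T/I)`, with equality iff
`(w, g) = (w*, g*)`. -/
theorem wmmse_unique_minimizer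
    (N : ℕ) (hN : 1 ≤ N) (h p : Fin N → ℂ) (I : ℝ) (hI : 0 < I)
    (a : ℂ) (ha : a = ∑ i, starRingEnd ℂ (h i) * p i)
    (T : ℝ) (hT : T = I + ‖a‖ ^ 2)
    (ε : ℂ → ℝ) (hε : ∀ g : ℂ, ε g = ‖g‖ ^ 2 * T - 2 * (g * a).re + 1)
    (ξ : ℝ → ℂ → ℝ) (hξ : ∀ (w : ℝ) (g : ℂ), ξ w g = w * ε g - Real.log w) :
    ∀ w : ℝ, 0 < w → ∀ g : ℂ,
      ξ w g ≥ 1 - Real.log (T / I) ∧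
      (ξ w g = 1 - Real.log (T / I) ↔ w = T / I ∧ g = starRingEnd ℂ a / (T : ℂ)) := by
  intro w hw g
  have hT0 : 0 < T := by rw [hT]; positivity
  set c : ℂ := starRingEnd ℂ a / (T : ℂ) with hc
  have hI' : I = T - ‖a‖ ^ 2 := by rw [hT]; ring
  have hεg : ε g = T * ‖g - c‖ ^ 2 + I / T := by
    rw [hε, hc, hI']
    simp only [Complex.sq_norm, Complex.normSq_apply,
      Complex.sub_re, Complex.sub_im, Complex.div_re, Complex.div_im,
      Complex.mul_re, Complex.ofReal_re, Complex.ofReal_im,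
      Complex.conj_re, Complex.conj_im]
    field_simp
    ring
  set x : ℝ := w * I / T with hx
  have hx0 : 0 < x := by positivity
  have hlogx : Real.log x = Real.log w + Real.log (I / T) := by
    rw [hx, mul_div_assoc, Real.log_mul hw.ne' (by positivity)]
  have hlog2 : Real.log (T / I) = - Real.log (I / T) := by
    rw [← Real.log_inv, inv_div]
  have hξeq : ξ w g - (1 - Real.log (T / I)) =
      w * (T * ‖g - c‖ ^ 2) + (x - Real.log x - 1) := by
    rw [hξ, hεg, hlogx, hlog2, hx]
    field_simp
    ring
  have hsq : 0 ≤ w * (T * ‖g - c‖ ^ 2) := by positivity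
  have hxlog : 0 ≤ x - Real.log x - 1 := by
    have := Real.log_le_sub_one_of_pos hx0
    linarith
  constructor
  · linarith [hξeq, hsq, hxlog]
  constructor
  · intro heq
    have hzero : w * (T * ‖g - c‖ ^ 2) + (x - Real.log x - 1) = 0 := by
      rw [← hξeq, heq]; ring
    have h1 : x - Real.log x - 1 = 0 := by nlinarith
    have hx1 : x = 1 := by
      by_contra hne
      have := Real.log_lt_sub_one_of_pos hx0 hne
      linarith
    have hwv : w = T / I := by
      rw [hx] at hx1
      field_simp at hx1 ⊢
      linarith
    refine ⟨hwv, ?_⟩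
    have h2 : w * (T * ‖g - c‖ ^ 2) = 0 := by linarith
    have h3 : ‖g - c‖ ^ 2 = 0 := by
      rcases mul_eq_zero.1 h2 with h' | h'
      · exact absurd h' hw.ne'
      rcases mul_eq_zero.1 h' with h'' | h''
      · exact absurd h'' hT0.ne'
      · exact h''
    have hg0 : g = c := by
      have := pow_eq_zero_iff (n := 2) (by norm_num) |>.1 h3
      simpa [sub_eq_zero] using this
    rw [hg0, hc]
  · rintro ⟨hwv, hgv⟩
    have hx1 : x = 1 := by rw [hx, hwv]; field_simp
    have hgc : g = c := by rw [hgv, hc]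
    have : ξ w g - (1 - Real.log (T / I)) = 0 := by
      rw [hξeq, hgc, hx1]
      simp
    linarith
end

section
/- Let h_k ∈ ℂ^N be the actual channel of user k, p_c ∈ ℂ^N the precoder of the common stream, and p_1, …, p_K ∈ ℂ^N the private precoders. Define the interference-plus-noise power I_{c,k} = ∑_{j=1}^{K} |h_k^H p_j|² + 1 and the common-stream rate R_{c,k} = ln(1 + |h_k^H p_c|²/I_{c,k}). Then the weighted minimum mean square error of the common stream at user k, namely the infimum over w > 0 and g ∈ ℂ of w·(|g|²·(I_{c,k} + |h_k^H p_c|²) − 2·Re(g·(h_k^H p_c)) + 1) − ln w, equals 1 − R_{c,k}, and this infimum is attained (at g* = conj(h_k^H p_c)/(I_{c,k} + |h_k^H p_c|²) and w* = (I_{c,k} + |h_k^H p_c|²)/I_{c,k}). -/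
/-- Rate–WMMSE relationship for the common stream at user `k`
in rate-splitting. With actual channel `h k`, common precoder `pc`, private
precoders `p 1, …, p K`, interference-plus-noise power
`I_{c,k} = ∑_{j=1}^K |h_kᴴ p_j|² + 1` and common-stream rate
`R_{c,k} = ln(1 + |h_kᴴ p_c|²/I_{c,k})`, the infimum over `w > 0`, `g ∈ ℂ` of
`w(|g|²(I_{c,k} + |a|²) − 2 Re(g a) + 1) − ln w` (where `a = h_kᴴ p_c`) equals
`1 − R_{c,k}` and is attained at `g* = conj(a)/(I_{c,k} + |a|²)`,
`w* = (I_{c,k} + |a|²)/I_{c,k}`. -/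
theorem common_stream_rate_wmmse
    (N K : ℕ) (hN : 1 ≤ N) (hK : 1 ≤ K)
    (h : Fin K → Fin N → ℂ) (pc : Fin N → ℂ) (p : Fin K → Fin N → ℂ) (k : Fin K)
    (a : ℂ) (ha : a = ∑ n, starRingEnd ℂ (h k n) * pc n)
    (Ick : ℝ)
    (hIck : Ick = (∑ j, ‖∑ n, starRingEnd ℂ (h k n) * p j n‖ ^ 2) + 1)
    (Rck : ℝ) (hRck : Rck = Real.log (1 + ‖a‖ ^ 2 / Ick)) :
    IsLeast {y : ℝ | ∃ w : ℝ, ∃ g : ℂ, 0 < w ∧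
        y = w * (‖g‖ ^ 2 * (Ick + ‖a‖ ^ 2) - 2 * (g * a).re + 1) - Real.log w}
      (1 - Rck) ∧
    ((Ick + ‖a‖ ^ 2) / Ick) *
        (‖starRingEnd ℂ a / ((Ick + ‖a‖ ^ 2 : ℝ) : ℂ)‖ ^ 2 * (Ick + ‖a‖ ^ 2)
          - 2 * ((starRingEnd ℂ a / ((Ick + ‖a‖ ^ 2 : ℝ) : ℂ)) * a).re + 1)
      - Real.log ((Ick + ‖a‖ ^ 2) / Ick) = 1 - Rck := by
  have hIpos : 0 < Ick := by
    rw [hIck]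
    have : (0:ℝ) ≤ ∑ j, ‖∑ n, starRingEnd ℂ (h k n) * p j n‖ ^ 2 :=
      Finset.sum_nonneg fun j _ => sq_nonneg _
    linarith
  set T : ℝ := Ick + ‖a‖ ^ 2 with hT
  have hTpos : 0 < T := by positivity
  have hTne : (T:ℝ) ≠ 0 := ne_of_gt hTpos
  have hRck' : Rck = Real.log (T / Ick) := by
    rw [hRck]
    congr 1
    field_simp [hT]
    exact hT.symm
  have hgnorm : ‖starRingEnd ℂ a / ((T : ℝ) : ℂ)‖ ^ 2 = ‖a‖ ^ 2 / T ^ 2 := by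
    rw [norm_div, div_pow, RCLike.norm_conj, Complex.norm_real,
      Real.norm_of_nonneg hTpos.le]
  have hre : ((starRingEnd ℂ a / ((T : ℝ) : ℂ)) * a).re = ‖a‖ ^ 2 / T := by
    rw [div_mul_eq_mul_div, Complex.conj_mul', ← Complex.ofReal_pow,
      ← Complex.ofReal_div, Complex.ofReal_re]
  have hval : (T / Ick) *
        (‖starRingEnd ℂ a / ((T : ℝ) : ℂ)‖ ^ 2 * T
          - 2 * ((starRingEnd ℂ a / ((T : ℝ) : ℂ)) * a).re + 1)
      - Real.log (T / Ick) = 1 - Rck := by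
    rw [hgnorm, hre, hRck']
    have hinner : ‖a‖ ^ 2 / T ^ 2 * T - 2 * (‖a‖ ^ 2 / T) + 1 = Ick / T := by
      have hTA : ‖a‖ ^ 2 = T - Ick := by rw [hT]; ring
      rw [hTA]
      field_simp
      ring
    rw [hinner]
    have h1 : T / Ick * (Ick / T) = 1 := by
      field_simp
    rw [h1]
  constructor
  · constructor
    · exact ⟨T / Ick, starRingEnd ℂ a / ((T : ℝ) : ℂ),
        div_pos hTpos hIpos, hval.symm⟩
    · rintro y ⟨w, g, hw, rfl⟩
      have hM : Ick / T ≤ ‖g‖ ^ 2 * T - 2 * (g * a).re + 1 := by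
        have hg2 : ‖g‖ ^ 2 = g.re ^ 2 + g.im ^ 2 := by
          rw [Complex.sq_norm, Complex.normSq_apply]; ring
        have ha2 : ‖a‖ ^ 2 = a.re ^ 2 + a.im ^ 2 := by
          rw [Complex.sq_norm, Complex.normSq_apply]; ring
        have hrga : (g * a).re = g.re * a.re - g.im * a.im := by
          simp [Complex.mul_re]
        have hTdef : T = Ick + (a.re ^ 2 + a.im ^ 2) := by rw [hT, ha2]
        rw [hg2, hrga, div_le_iff₀ hTpos]
        nlinarith [sq_nonneg (g.re * T - a.re), sq_nonneg (g.im * T + a.im)]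
      set c : ℝ := Ick / T with hc
      have hcpos : 0 < c := div_pos hIpos hTpos
      have h1 : w * c - Real.log w ≤ w * (‖g‖ ^ 2 * T - 2 * (g * a).re + 1)
          - Real.log w := by
        have := mul_le_mul_of_nonneg_left hM hw.le
        linarith
      have h2 : 1 - Rck ≤ w * c - Real.log w := by
        have hwc : 0 < w * c := mul_pos hw hcpos
        have hlog : Real.log (w * c) ≤ w * c - 1 :=
          Real.log_le_sub_one_of_pos hwc
        rw [Real.log_mul (ne_of_gt hw) (ne_of_gt hcpos)] at hlog
        have hclog : Real.log c = - Rck := by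
          rw [hc, hRck', ← Real.log_inv, inv_div]
        linarith
      linarith
  · exact hval
end

section
/- Average Rate–WMMSE relationship: let M ≥ 1, and for each sample m = 1, …, M let a_m ∈ ℂ and I_m > 0 be given, with T_m = I_m + |a_m|² and ε_m(g) = |g|²·T_m − 2·Re(g·a_m) + 1. Then the infimum over all tuples (w_1, …, w_M) ∈ (0, ∞)^M and (g_1, …, g_M) ∈ ℂ^M of the sample average (1/M)·∑_{m=1}^{M} (w_m·ε_m(g_m) − ln w_m) equals 1 − (1/M)·∑_{m=1}^{M} ln(1 + |a_m|²/I_m), and this infimum is attained at g_m* = conj(a_m)/T_m and w_m* = T_m/I_m for each m. -/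
/-- **Average Rate–WMMSE relationship.** For samples
`m = 1, …, M` with effective channels `a m ∈ ℂ`, interference-plus-noise powers
`I m > 0`, `T m = I m + |a m|²` and MSEs `ε m g = |g|² T m − 2 Re(g a m) + 1`,
the infimum over `(w₁,…,w_M) ∈ (0,∞)^M` and `(g₁,…,g_M) ∈ ℂ^M` of
`(1/M) ∑_m (w_m ε_m(g_m) − ln w_m)` equals
`1 − (1/M) ∑_m ln(1 + |a_m|²/I_m)`, attained at `g_m* = conj(a_m)/T_m`,
`w_m* = T_m/I_m`. -/
theorem average_rate_wmmse
    (M : ℕ) (hM : 1 ≤ M) (a : Fin M → ℂ) (I : Fin M → ℝ) (hI : ∀ m, 0 < I m)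
    (T : Fin M → ℝ) (hT : ∀ m, T m = I m + ‖a m‖ ^ 2)
    (ε : Fin M → ℂ → ℝ)
    (hε : ∀ m (g : ℂ), ε m g = ‖g‖ ^ 2 * T m - 2 * (g * a m).re + 1) :
    IsLeast {y : ℝ | ∃ w : Fin M → ℝ, ∃ g : Fin M → ℂ, (∀ m, 0 < w m) ∧
        y = (1 / (M : ℝ)) * ∑ m, (w m * ε m (g m) - Real.log (w m))}
      (1 - (1 / (M : ℝ)) * ∑ m, Real.log (1 + ‖a m‖ ^ 2 / I m)) ∧
    (1 / (M : ℝ)) * ∑ m,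
        (T m / I m * ε m (starRingEnd ℂ (a m) / (T m : ℂ)) - Real.log (T m / I m))
      = 1 - (1 / (M : ℝ)) * ∑ m, Real.log (1 + ‖a m‖ ^ 2 / I m) := by
  have hMpos : (0 : ℝ) < (M : ℝ) := by exact_mod_cast hM
  have hT0 : ∀ m, 0 < T m := by
    intro m; have := hI m; rw [hT]; positivity
  have hratio : ∀ m, T m / I m = 1 + ‖a m‖ ^ 2 / I m := by
    intro m
    rw [hT m, add_div, div_self (hI m).ne']
  -- key identity : T m * ε m g = ‖T g - conj a‖² + I m
  have key : ∀ m (g : ℂ),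
      T m * ε m g = ‖(T m : ℂ) * g - starRingEnd ℂ (a m)‖ ^ 2 + I m := by
    intro m g
    rw [hε m g, hT m]
    have h1 : ∀ z : ℂ, ‖z‖ ^ 2 = Complex.normSq z := by
      intro z; rw [Complex.sq_norm]
    rw [h1, h1, h1]
    simp [Complex.normSq_apply, Complex.mul_re, Complex.sub_re, Complex.sub_im,
      Complex.mul_im]
    ring
  -- value of ε at the optimal equalizer
  have hεstar : ∀ m, ε m (starRingEnd ℂ (a m) / (T m : ℂ)) = I m / T m := by
    intro m
    have hTne : (T m : ℂ) ≠ 0 := by exact_mod_cast (hT0 m).ne'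
    have hk := key m (starRingEnd ℂ (a m) / (T m : ℂ))
    have hcanc : (T m : ℂ) * (starRingEnd ℂ (a m) / (T m : ℂ))
        = starRingEnd ℂ (a m) := by field_simp
    rw [hcanc, sub_self, norm_zero] at hk
    have hk2 : T m * ε m (starRingEnd ℂ (a m) / (T m : ℂ)) = I m := by
      simpa using hk
    rw [eq_div_iff (hT0 m).ne']
    linarith
  -- averaging helper
  have havg : ∀ f : Fin M → ℝ,
      (1 / (M : ℝ)) * ∑ m, (1 - f m) = 1 - (1 / (M : ℝ)) * ∑ m, f m := by
    intro f
    rw [Finset.sum_sub_distrib, Finset.sum_const, Finset.card_fin, nsmul_eq_mul,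
      mul_one, mul_sub]
    congr 1
    field_simp
  -- value of each summand at the optimum
  have hterm : ∀ m, T m / I m * ε m (starRingEnd ℂ (a m) / (T m : ℂ))
      - Real.log (T m / I m) = 1 - Real.log (1 + ‖a m‖ ^ 2 / I m) := by
    intro m
    have h1 : T m / I m * (I m / T m) = 1 := by
      field_simp
      rw [mul_comm]
      exact div_self (mul_pos (hI m) (hT0 m)).ne'
    rw [hεstar m, h1, hratio m]
  have hsum : (1 / (M : ℝ)) * ∑ m,
        (T m / I m * ε m (starRingEnd ℂ (a m) / (T m : ℂ)) - Real.log (T m / I m))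
      = 1 - (1 / (M : ℝ)) * ∑ m, Real.log (1 + ‖a m‖ ^ 2 / I m) := by
    rw [Finset.sum_congr rfl fun m _ => hterm m]
    exact havg _
  refine ⟨⟨⟨fun m => T m / I m, fun m => starRingEnd ℂ (a m) / (T m : ℂ),
      fun m => div_pos (hT0 m) (hI m), hsum.symm⟩, ?_⟩, hsum⟩
  rintro y ⟨w, g, hw, rfl⟩
  have hbound : ∀ m : Fin M, 1 - Real.log (1 + ‖a m‖ ^ 2 / I m)
      ≤ w m * ε m (g m) - Real.log (w m) := by
    intro m
    have hεge : I m / T m ≤ ε m (g m) := by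
      have hk := key m (g m)
      have hnn : 0 ≤ ‖(T m : ℂ) * g m - starRingEnd ℂ (a m)‖ ^ 2 := by positivity
      rw [div_le_iff₀ (hT0 m), mul_comm]
      linarith
    have hx : 0 < w m * (I m / T m) := mul_pos (hw m) (div_pos (hI m) (hT0 m))
    have hlog := Real.log_le_sub_one_of_pos hx
    rw [Real.log_mul (hw m).ne' (div_pos (hI m) (hT0 m)).ne'] at hlog
    have hld : Real.log (I m / T m) = - Real.log (1 + ‖a m‖ ^ 2 / I m) := by
      rw [← hratio m, Real.log_div (hI m).ne' (hT0 m).ne',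
        Real.log_div (hT0 m).ne' (hI m).ne']
      ring
    have h2 : w m * (I m / T m) ≤ w m * ε m (g m) :=
      mul_le_mul_of_nonneg_left hεge (hw m).le
    rw [hld] at hlog
    linarith
  rw [← havg fun m => Real.log (1 + ‖a m‖ ^ 2 / I m)]
  exact mul_le_mul_of_nonneg_left (Finset.sum_le_sum fun m _ => hbound m)
    (by positivity)
end
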